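/- Let (I_{uv})_{u<v} be the edge indicators of an Erdős–Rényi random graph G(n,p), and for distinct vertices i, j, k, l define η_{ijkl} = I_{ij} I_{jk} I_{kl} I_{il} − p^3 (I_{ij} + I_{jk} + I_{kl} + I_{il}) + 3 p^4. If (i, j, k, l) and (u, v, w, m) are two quadruples of distinct vertices with |{i,j,k,l} ∩ {u,v,w,m}| ≤ 2, then E(η_{ijkl} η_{uvwm}) = 0. -/

import Mathlib

open MeasureTheory ProbabilityTheory
open scoped ENNReal NNReal

noncomputable section

/-- The Erdős–Rényi random graph measure `G(n,p)`: each potential edge (unordered pair of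
vertices) is present independently with probability `p`. -/
def erMeasure (n : ℕ) (p : ℝ≥0∞) : Measure (Sym2 (Fin n) → Bool) :=
  Measure.pi fun _ => (PMF.bernoulli (min p 1).toNNReal
    (by simpa using ENNReal.toNNReal_mono ENNReal.one_ne_top (min_le_right p 1))).toMeasure

/-- The indicator `I_{ij}` (as a real number) that there is an edge connecting `i` and `j`. -/
def edgeInd {n : ℕ} (ω : Sym2 (Fin n) → Bool) (i j : Fin n) : ℝ :=
  if ω (Sym2.mk i j) then 1 else 0

/-- `T₁`: the number of edges. -/
def T1 {n : ℕ} (ω : Sym2 (Fin n) → Bool) : ℝ :=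
  ∑ i : Fin n, ∑ j : Fin n, if i < j then edgeInd ω i j else 0

/-- `T₂`: the number of 4-cycles. -/
def T2 {n : ℕ} (ω : Sym2 (Fin n) → Bool) : ℝ :=
  (1 / 8) * ∑ i : Fin n, ∑ j : Fin n, ∑ k : Fin n, ∑ l : Fin n,
    if i ≠ j ∧ i ≠ k ∧ i ≠ l ∧ j ≠ k ∧ j ≠ l ∧ k ≠ l then
      edgeInd ω i j * edgeInd ω j k * edgeInd ω k l * edgeInd ω l i
    else 0

/-- The normalised edge count `W₁(p, Gₙ)`. -/
def W1 (n : ℕ) (p : ℝ) (ω : Sym2 (Fin n) → Bool) : ℝ :=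
  (T1 ω - (n.choose 2 : ℝ) * p) / Real.sqrt ((n.choose 2 : ℝ) * p * (1 - p))

/-- The corrected and normalised 4-cycle count `W₂(p, Gₙ)`. -/
def W2 (n : ℕ) (p : ℝ) (ω : Sym2 (Fin n) → Bool) : ℝ :=
  (T2 ω - 2 * ((n - 2).choose 2 : ℝ) * p ^ 3 * T1 ω + 9 * (n.choose 4 : ℝ) * p ^ 4) /
    Real.sqrt (3 * (n.choose 4 : ℝ) * (p ^ 4 * (1 - 4 * p ^ 3 + 3 * p ^ 4)
      + (4 * ((n : ℝ) - 4) + 2) * p ^ 6 * (1 - 2 * p + p ^ 2)))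

/-- `η_{ijkl}`. -/
def eta {n : ℕ} (p : ℝ) (i j k l : Fin n) (ω : Sym2 (Fin n) → Bool) : ℝ :=
  edgeInd ω i j * edgeInd ω j k * edgeInd ω k l * edgeInd ω i l
    - p ^ 3 * (edgeInd ω i j + edgeInd ω j k + edgeInd ω k l + edgeInd ω i l)
    + 3 * p ^ 4
def J {n : ℕ} (S : Finset (Sym2 (Fin n))) (ω : Sym2 (Fin n) → Bool) : ℝ :=
  if ∀ e ∈ S, ω e = true then 1 else 0


lemma J_mul {n : ℕ} (S T : Finset (Sym2 (Fin n))) (ω : Sym2 (Fin n) → Bool) :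
    J S ω * J T ω = J (S ∪ T) ω := by
  simp only [J, Finset.forall_mem_union]
  split_ifs <;> simp_all


instance erProb (n : ℕ) (p : ℝ≥0∞) : IsProbabilityMeasure (erMeasure n p) := by
  unfold erMeasure; infer_instance


lemma integral_J {n : ℕ} (p : ℝ) (hp : 0 ≤ p) (hp1 : p ≤ 1) (S : Finset (Sym2 (Fin n))) :
    ∫ ω, J S ω ∂(erMeasure n (ENNReal.ofReal p)) = p ^ S.card := by
  have hmin : min (ENNReal.ofReal p) 1 = ENNReal.ofReal p :=
    min_eq_left (by simpa using ENNReal.ofReal_le_one.mpr hp1)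
  have hq1 : (min (ENNReal.ofReal p) 1).toNNReal ≤ 1 := by
    simpa using ENNReal.toNNReal_mono ENNReal.one_ne_top (min_le_right (ENNReal.ofReal p) 1)
  have hb : ∀ f : Bool → ℝ, ∫ x, f x ∂((PMF.bernoulli (min (ENNReal.ofReal p) 1).toNNReal hq1).toMeasure)
      = ((1 - (min (ENNReal.ofReal p) 1).toNNReal : ℝ≥0) : ℝ) * f false
        + ((min (ENNReal.ofReal p) 1).toNNReal : ℝ) * f true := by
    intro f
    rw [MeasureTheory.integral_fintype (Integrable.of_finite)]
    simp [measureReal_def, PMF.toMeasure_apply_singleton, PMF.bernoulli_apply]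
    ring
  have hqr : ((min (ENNReal.ofReal p) 1).toNNReal : ℝ) = p := by
    rw [hmin, ENNReal.coe_toNNReal_eq_toReal, ENNReal.toReal_ofReal hp]
  have hqr1 : ((1 - (min (ENNReal.ofReal p) 1).toNNReal : ℝ≥0) : ℝ) = 1 - p := by
    rw [NNReal.coe_sub hq1, hqr, NNReal.coe_one]
  have h1 : ∀ ω : Sym2 (Fin n) → Bool,
      J S ω = ∏ e, (if e ∈ S then (if ω e then (1:ℝ) else 0) else 1) := by
    intro ω
    rw [Finset.prod_ite_mem, Finset.univ_inter, Finset.prod_boole]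
    simp [J]
  calc ∫ ω, J S ω ∂(erMeasure n (ENNReal.ofReal p))
      = ∫ ω, ∏ e, (if e ∈ S then (if ω e then (1:ℝ) else 0) else 1)
          ∂(Measure.pi fun _ => (PMF.bernoulli (min (ENNReal.ofReal p) 1).toNNReal hq1).toMeasure) := by
        simp only [h1]; rfl
    _ = ∏ e, ∫ x, (if e ∈ S then (if x then (1:ℝ) else 0) else 1)
          ∂((PMF.bernoulli (min (ENNReal.ofReal p) 1).toNNReal hq1).toMeasure) := by
        letI : MeasureSpace Bool := ⟨(PMF.bernoulli (min (ENNReal.ofReal p) 1).toNNReal hq1).toMeasure⟩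
        haveI : SigmaFinite (volume : Measure Bool) :=
          inferInstanceAs (SigmaFinite (PMF.bernoulli (min (ENNReal.ofReal p) 1).toNNReal hq1).toMeasure)
        exact MeasureTheory.integral_fintype_prod_eq_prod
          (fun (e : Sym2 (Fin n)) (x : Bool) => if e ∈ S then (if x then (1:ℝ) else 0) else 1)
    _ = ∏ e, (if e ∈ S then p else 1) := by
        refine Finset.prod_congr rfl fun e _ => ?_
        rw [hb]
        by_cases heS : e ∈ S <;> simp [heS, hqr, hqr1]
    _ = p ^ S.card := by
        rw [Finset.prod_ite_mem, Finset.univ_inter, Finset.prod_const]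

lemma sum_ite_mem_const {α : Type*} [DecidableEq α] (B A : Finset α) (x y : ℝ) :
    ∑ e ∈ B, (if e ∈ A then x else y)
      = (B ∩ A).card * x + ((B.card : ℝ) - (B ∩ A).card) * y := by
  rw [Finset.sum_ite, Finset.sum_const, Finset.sum_const]
  have h1 : B.filter (· ∈ A) = B ∩ A := by ext e; simp [Finset.mem_inter, Finset.mem_filter]
  have h2 : B.filter (· ∉ A) = B \ A := by ext e; simp [Finset.mem_sdiff, Finset.mem_filter]
  rw [h1, h2, nsmul_eq_mul, nsmul_eq_mul]
  have h4 : ((B \ A).card : ℝ) = (B.card : ℝ) - ((B ∩ A).card : ℝ) := by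
    have h3 := Finset.card_inter_add_card_sdiff B A
    have h5 : (((B ∩ A).card + (B \ A).card : ℕ) : ℝ) = (B.card : ℝ) := by rw [h3]
    push_cast at h5; linarith
  rw [h4]


lemma main_calc {n : ℕ} (p : ℝ) (h0 : 0 ≤ p) (h1 : p ≤ 1) (A B : Finset (Sym2 (Fin n)))
    (hA : A.card = 4) (hB : B.card = 4) (hs : (A ∩ B).card ≤ 1) :
    ∫ ω, (J A ω - p^3 * (∑ e ∈ A, J {e} ω) + 3*p^4)
        * (J B ω - p^3 * (∑ e ∈ B, J {e} ω) + 3*p^4)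
      ∂(erMeasure n (ENNReal.ofReal p)) = 0 := by
  classical
  set μ := erMeasure n (ENNReal.ofReal p) with hμ
  have hInt : ∀ f : (Sym2 (Fin n) → Bool) → ℝ, Integrable f μ := fun f =>
    Integrable.of_finite
  -- pointwise expansion
  have hpt : ∀ ω, (J A ω - p^3 * (∑ e ∈ A, J {e} ω) + 3*p^4)
        * (J B ω - p^3 * (∑ e ∈ B, J {e} ω) + 3*p^4)
      = J (A ∪ B) ω - p^3 * (∑ e' ∈ B, J (A ∪ {e'}) ω) + 3*p^4 * J A ω
        - p^3 * (∑ e ∈ A, J ({e} ∪ B) ω)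
        + p^6 * (∑ e ∈ A, ∑ e' ∈ B, J ({e} ∪ {e'}) ω)
        - 3*p^7 * (∑ e ∈ A, J {e} ω) + 3*p^4 * J B ω
        - 3*p^7 * (∑ e' ∈ B, J {e'} ω) + 9*p^8 := by
    intro ω
    have h2 : J A ω * J B ω = J (A ∪ B) ω := J_mul _ _ _
    have h3 : J A ω * (∑ e' ∈ B, J {e'} ω) = ∑ e' ∈ B, J (A ∪ {e'}) ω := by
      rw [Finset.mul_sum]; exact Finset.sum_congr rfl fun e' _ => J_mul _ _ _
    have h4 : (∑ e ∈ A, J {e} ω) * J B ω = ∑ e ∈ A, J ({e} ∪ B) ω := by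
      rw [Finset.sum_mul]; exact Finset.sum_congr rfl fun e _ => J_mul _ _ _
    have h5 : (∑ e ∈ A, J {e} ω) * (∑ e' ∈ B, J {e'} ω)
        = ∑ e ∈ A, ∑ e' ∈ B, J ({e} ∪ {e'}) ω := by
      rw [Finset.sum_mul_sum]
      exact Finset.sum_congr rfl fun e _ => Finset.sum_congr rfl fun e' _ => J_mul _ _ _
    calc (J A ω - p^3 * (∑ e ∈ A, J {e} ω) + 3*p^4)
          * (J B ω - p^3 * (∑ e ∈ B, J {e} ω) + 3*p^4)
        = J A ω * J B ω - p^3 * (J A ω * (∑ e' ∈ B, J {e'} ω)) + 3*p^4 * J A ω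
          - p^3 * ((∑ e ∈ A, J {e} ω) * J B ω)
          + p^6 * ((∑ e ∈ A, J {e} ω) * (∑ e' ∈ B, J {e'} ω))
          - 3*p^7 * (∑ e ∈ A, J {e} ω) + 3*p^4 * J B ω
          - 3*p^7 * (∑ e' ∈ B, J {e'} ω) + 9*p^8 := by ring
      _ = _ := by rw [h2, h3, h4, h5]
  simp only [hpt]
  rw [integral_add (hInt _) (hInt _), integral_sub (hInt _) (hInt _),
    integral_add (hInt _) (hInt _), integral_sub (hInt _) (hInt _),
    integral_add (hInt _) (hInt _), integral_sub (hInt _) (hInt _),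
    integral_add (hInt _) (hInt _), integral_sub (hInt _) (hInt _)]
  rw [integral_const]
  simp only [measure_univ, probReal_univ, ENNReal.toReal_one, smul_eq_mul, one_mul]
  rw [integral_const_mul, integral_const_mul, integral_const_mul, integral_const_mul,
    integral_const_mul, integral_const_mul, integral_const_mul]
  rw [integral_finset_sum _ (fun e _ => hInt _), integral_finset_sum _ (fun e _ => hInt _),
    integral_finset_sum _ (fun e _ => hInt _), integral_finset_sum _ (fun e _ => hInt _),
    integral_finset_sum _ (fun e _ => hInt _)]
  simp only [integral_finset_sum _ (fun e _ => hInt _)]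
  simp only [hμ, integral_J p h0 h1]
  -- now a numeric identity
  have hAB : (A ∪ B).card = 8 - (A ∩ B).card := by
    have := Finset.card_union_add_card_inter A B
    omega
  have hsum1 : ∑ e' ∈ B, p ^ (A ∪ {e'}).card
      = ((B ∩ A).card : ℝ) * p^4 + ((4 : ℝ) - (B ∩ A).card) * p^5 := by
    rw [show ∑ e' ∈ B, p ^ (A ∪ {e'}).card = ∑ e' ∈ B, (if e' ∈ A then p^4 else p^5) from
      Finset.sum_congr rfl fun e' _ => by
        rw [Finset.union_comm, ← Finset.insert_eq]
        by_cases h : e' ∈ A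
        · rw [if_pos h, Finset.insert_eq_self.mpr h, hA]
        · rw [if_neg h, Finset.card_insert_of_notMem h, hA],
      sum_ite_mem_const, hB]
    norm_num
  have hsum2 : ∑ e ∈ A, p ^ ({e} ∪ B).card
      = ((A ∩ B).card : ℝ) * p^4 + ((4 : ℝ) - (A ∩ B).card) * p^5 := by
    rw [show ∑ e ∈ A, p ^ ({e} ∪ B).card = ∑ e ∈ A, (if e ∈ B then p^4 else p^5) from
      Finset.sum_congr rfl fun e _ => by
        rw [← Finset.insert_eq]
        by_cases h : e ∈ B
        · rw [if_pos h, Finset.insert_eq_self.mpr h, hB]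
        · rw [if_neg h, Finset.card_insert_of_notMem h, hB],
      sum_ite_mem_const, hA]
    norm_num
  have hsum3 : ∑ e ∈ A, ∑ e' ∈ B, p ^ (({e} ∪ {e'} : Finset (Sym2 (Fin n))).card)
      = ((A ∩ B).card : ℝ) * p + (16 - (A ∩ B).card) * p^2 := by
    rw [show (∑ e ∈ A, ∑ e' ∈ B, p ^ (({e} ∪ {e'} : Finset (Sym2 (Fin n))).card))
        = ∑ e ∈ A, ((if e ∈ B then p else p^2) + 3 * p^2) from
      Finset.sum_congr rfl fun e _ => by
        rw [show (∑ e' ∈ B, p ^ (({e} ∪ {e'} : Finset (Sym2 (Fin n))).card)) = ∑ e' ∈ B, (if e' = e then p else p^2) from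
          Finset.sum_congr rfl fun e' _ => by
            rw [← Finset.insert_eq]
            by_cases h : e' = e
            · subst h; rw [if_pos rfl]; simp
            · rw [if_neg h, Finset.card_insert_of_notMem (by simp [Ne.symm h])]; simp]
        rw [show (∑ e' ∈ B, (if e' = e then p else p^2))
            = ∑ e' ∈ B, (if e' ∈ ({e} : Finset (Sym2 (Fin n))) then p else p^2) by
          simp]
        rw [sum_ite_mem_const, hB]
        by_cases h : e ∈ B
        · rw [if_pos h, Finset.inter_eq_right.mpr (Finset.singleton_subset_iff.mpr h),
            Finset.card_singleton]
          push_cast; ring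
        · rw [if_neg h, Finset.inter_comm, Finset.singleton_inter_of_notMem h,
            Finset.card_empty]
          push_cast; ring]
    rw [Finset.sum_add_distrib, Finset.sum_const, hA, sum_ite_mem_const, hA]
    push_cast
    ring
  have hsum4 : ∑ e ∈ A, p ^ ({e} : Finset (Sym2 (Fin n))).card = 4 * p := by
    simp [hA]
  have hsum5 : ∑ e ∈ B, p ^ ({e} : Finset (Sym2 (Fin n))).card = 4 * p := by
    simp [hB]
  rw [hsum1, hsum2, hsum3, hsum4, hsum5, hAB, hA, hB]
  rw [Finset.inter_comm B A]
  interval_cases h : (A ∩ B).card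
  · norm_num; ring
  · norm_num; ring

lemma quad_card {n : ℕ} (i j k l : Fin n) (hij : i ≠ j) (hik : i ≠ k) (hil : i ≠ l)
    (hjk : j ≠ k) (hjl : j ≠ l) (hkl : k ≠ l) :
    ({Sym2.mk i j, Sym2.mk j k, Sym2.mk k l, Sym2.mk i l} :
      Finset (Sym2 (Fin n))).card = 4 := by
  rw [Finset.card_insert_of_notMem (by simp [Sym2.eq_iff]; tauto),
    Finset.card_insert_of_notMem (by simp [Sym2.eq_iff]; tauto),
    Finset.card_insert_of_notMem (by simp [Sym2.eq_iff]; tauto),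
    Finset.card_singleton]


lemma three_le_card_inter {n : ℕ} (V1 V2 : Finset (Fin n)) (x y z : Fin n)
    (hxy : x ≠ y) (hxz : x ≠ z) (hyz : y ≠ z)
    (hx1 : x ∈ V1) (hy1 : y ∈ V1) (hz1 : z ∈ V1)
    (hx2 : x ∈ V2) (hy2 : y ∈ V2) (hz2 : z ∈ V2) : 3 ≤ (V1 ∩ V2).card := by
  have hsub : ({x, y, z} : Finset (Fin n)) ⊆ V1 ∩ V2 := by
    intro t ht
    simp only [Finset.mem_insert, Finset.mem_singleton] at ht
    rcases ht with rfl | rfl | rfl <;> simp [Finset.mem_inter, *]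
  have hc : ({x, y, z} : Finset (Fin n)).card = 3 := by
    rw [Finset.card_insert_of_notMem (by simp [hxy, hxz]),
      Finset.card_insert_of_notMem (by simp [hyz]), Finset.card_singleton]
  have := Finset.card_le_card hsub
  omega


set_option maxHeartbeats 1000000 in
lemma inter_card_le_one {n : ℕ} (i j k l u v w m : Fin n)
    (huv : u ≠ v) (huw : u ≠ w) (hum : u ≠ m) (hvw : v ≠ w) (hvm : v ≠ m) (hwm : w ≠ m)
    (hcap : (({i, j, k, l} : Finset (Fin n)) ∩ {u, v, w, m}).card ≤ 2) :
    (({Sym2.mk i j, Sym2.mk j k, Sym2.mk k l, Sym2.mk i l} : Finset (Sym2 (Fin n)))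
      ∩ {Sym2.mk u v, Sym2.mk v w, Sym2.mk w m, Sym2.mk u m}).card ≤ 1 := by
  by_contra hcon
  push_neg at hcon
  obtain ⟨e1, he1, e2, he2, hne⟩ := Finset.one_lt_card.mp hcon
  rw [Finset.mem_inter] at he1 he2
  obtain ⟨he1A, he1B⟩ := he1
  obtain ⟨he2A, he2B⟩ := he2
  have hA1 : ∀ e ∈ ({Sym2.mk i j, Sym2.mk j k, Sym2.mk k l, Sym2.mk i l} :
      Finset (Sym2 (Fin n))), ∀ x, x ∈ e → x ∈ ({i, j, k, l} : Finset (Fin n)) := by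
    intro e he x hx
    simp only [Finset.mem_insert, Finset.mem_singleton] at he ⊢
    rcases he with rfl | rfl | rfl | rfl <;>
      (rw [Sym2.mem_iff] at hx; tauto)
  have hV2 : ∀ x : Fin n, (x = u ∨ x = v ∨ x = w ∨ x = m) →
      x ∈ ({u, v, w, m} : Finset (Fin n)) := by
    intro x hx; simp only [Finset.mem_insert, Finset.mem_singleton]; tauto
  have key : ∀ x y z : Fin n, x ≠ y → x ≠ z → y ≠ z →
      x ∈ ({i,j,k,l} : Finset (Fin n)) → y ∈ ({i,j,k,l} : Finset (Fin n)) →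
      z ∈ ({i,j,k,l} : Finset (Fin n)) →
      x ∈ ({u,v,w,m} : Finset (Fin n)) → y ∈ ({u,v,w,m} : Finset (Fin n)) →
      z ∈ ({u,v,w,m} : Finset (Fin n)) → False := by
    intro x y z h1 h2 h3 h4 h5 h6 h7 h8 h9
    have := three_le_card_inter _ _ x y z h1 h2 h3 h4 h5 h6 h7 h8 h9
    omega
  simp only [Finset.mem_insert, Finset.mem_singleton] at he1B he2B
  have mem1 : ∀ (x : Fin n) (e : Sym2 (Fin n)), x ∈ e →
      e ∈ ({Sym2.mk i j, Sym2.mk j k, Sym2.mk k l, Sym2.mk i l} :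
        Finset (Sym2 (Fin n))) → x ∈ ({i, j, k, l} : Finset (Fin n)) :=
    fun x e hx he => hA1 e he x hx
  have hv2 : ∀ x : Fin n, x ∈ ({u,v,w,m} : Finset (Fin n)) ∨ True := fun _ => Or.inr trivial
  rcases he1B with rfl | rfl | rfl | rfl <;> rcases he2B with rfl | rfl | rfl | rfl
  · exact hne rfl
  · exact key u v w huv huw hvw (mem1 u _ (by simp) he1A) (mem1 v _ (by simp) he1A)
      (mem1 w _ (by simp) he2A) (by simp) (by simp) (by simp)
  · exact key u v w huv huw hvw (mem1 u _ (by simp) he1A) (mem1 v _ (by simp) he1A)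
      (mem1 w _ (by simp) he2A) (by simp) (by simp) (by simp)
  · exact key u v m huv hum hvm (mem1 u _ (by simp) he1A) (mem1 v _ (by simp) he1A)
      (mem1 m _ (by simp) he2A) (by simp) (by simp) (by simp)
  · exact key u v w huv huw hvw (mem1 u _ (by simp) he2A) (mem1 v _ (by simp) he1A)
      (mem1 w _ (by simp) he1A) (by simp) (by simp) (by simp)
  · exact hne rfl
  · exact key v w m hvw hvm hwm (mem1 v _ (by simp) he1A) (mem1 w _ (by simp) he1A)
      (mem1 m _ (by simp) he2A) (by simp) (by simp) (by simp)
  · exact key u v w huv huw hvw (mem1 u _ (by simp) he2A) (mem1 v _ (by simp) he1A)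
      (mem1 w _ (by simp) he1A) (by simp) (by simp) (by simp)
  · exact key u v w huv huw hvw (mem1 u _ (by simp) he2A) (mem1 v _ (by simp) he2A)
      (mem1 w _ (by simp) he1A) (by simp) (by simp) (by simp)
  · exact key v w m hvw hvm hwm (mem1 v _ (by simp) he2A) (mem1 w _ (by simp) he1A)
      (mem1 m _ (by simp) he1A) (by simp) (by simp) (by simp)
  · exact hne rfl
  · exact key u w m huw hum hwm (mem1 u _ (by simp) he2A) (mem1 w _ (by simp) he1A)
      (mem1 m _ (by simp) he1A) (by simp) (by simp) (by simp)
  · exact key u v m huv hum hvm (mem1 u _ (by simp) he1A) (mem1 v _ (by simp) he2A)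
      (mem1 m _ (by simp) he1A) (by simp) (by simp) (by simp)
  · exact key u v w huv huw hvw (mem1 u _ (by simp) he1A) (mem1 v _ (by simp) he2A)
      (mem1 w _ (by simp) he2A) (by simp) (by simp) (by simp)
  · exact key u w m huw hum hwm (mem1 u _ (by simp) he1A) (mem1 w _ (by simp) he2A)
      (mem1 m _ (by simp) he1A) (by simp) (by simp) (by simp)
  · exact hne rfl

lemma eta_eq {n : ℕ} (p : ℝ) (i j k l : Fin n)
    (hij : i ≠ j) (hik : i ≠ k) (hil : i ≠ l) (hjk : j ≠ k) (hjl : j ≠ l) (hkl : k ≠ l)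
    (ω : Sym2 (Fin n) → Bool) :
    eta p i j k l ω
      = J ({Sym2.mk i j, Sym2.mk j k, Sym2.mk k l, Sym2.mk i l} :
            Finset (Sym2 (Fin n))) ω
        - p^3 * (∑ e ∈ ({Sym2.mk i j, Sym2.mk j k, Sym2.mk k l, Sym2.mk i l} :
            Finset (Sym2 (Fin n))), J {e} ω)
        + 3*p^4 := by
  have hedge : ∀ x y : Fin n, edgeInd ω x y = J {Sym2.mk x y} ω := by
    intro x y; simp [edgeInd, J]
  have hprod : edgeInd ω i j * edgeInd ω j k * edgeInd ω k l * edgeInd ω i l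
      = J ({Sym2.mk i j, Sym2.mk j k, Sym2.mk k l, Sym2.mk i l} :
            Finset (Sym2 (Fin n))) ω := by
    rw [hedge, hedge, hedge, hedge, J_mul, J_mul, J_mul]
    congr 1
    ext e
    simp only [Finset.mem_union, Finset.mem_insert, Finset.mem_singleton]
    tauto
  have hsum : (∑ e ∈ ({Sym2.mk i j, Sym2.mk j k, Sym2.mk k l, Sym2.mk i l} :
        Finset (Sym2 (Fin n))), J {e} ω)
      = J {Sym2.mk i j} ω + J {Sym2.mk j k} ω + J {Sym2.mk k l} ω
        + J {Sym2.mk i l} ω := by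
    rw [Finset.sum_insert (by simp [Sym2.eq_iff]; tauto),
      Finset.sum_insert (by simp [Sym2.eq_iff]; tauto),
      Finset.sum_insert (by simp [Sym2.eq_iff]; tauto), Finset.sum_singleton]
    ring
  rw [hsum]
  simp only [eta]
  rw [hprod, hedge, hedge, hedge, hedge]

/-- **Lemma 3.5 (second part)**: `E(η_{ijkl} η_{uvwm}) = 0` whenever the two quadruples
of distinct vertices share at most two vertices. -/
theorem eta_product_mean_zero (n : ℕ) (p : ℝ) (hp : 0 < p) (hp1 : p < 1)
    (i j k l u v w m : Fin n)
    (hij : i ≠ j) (hik : i ≠ k) (hil : i ≠ l) (hjk : j ≠ k) (hjl : j ≠ l) (hkl : k ≠ l)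
    (huv : u ≠ v) (huw : u ≠ w) (hum : u ≠ m) (hvw : v ≠ w) (hvm : v ≠ m) (hwm : w ≠ m)
    (hcap : (({i, j, k, l} : Finset (Fin n)) ∩ {u, v, w, m}).card ≤ 2) :
    ∫ ω, eta p i j k l ω * eta p u v w m ω ∂(erMeasure n (ENNReal.ofReal p)) = 0 := by
  have hrw : ∀ ω : Sym2 (Fin n) → Bool,
      eta p i j k l ω * eta p u v w m ω
        = (J ({Sym2.mk i j, Sym2.mk j k, Sym2.mk k l, Sym2.mk i l} :
              Finset (Sym2 (Fin n))) ω
            - p^3 * (∑ e ∈ ({Sym2.mk i j, Sym2.mk j k, Sym2.mk k l, Sym2.mk i l} :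
              Finset (Sym2 (Fin n))), J {e} ω) + 3*p^4)
          * (J ({Sym2.mk u v, Sym2.mk v w, Sym2.mk w m, Sym2.mk u m} :
              Finset (Sym2 (Fin n))) ω
            - p^3 * (∑ e ∈ ({Sym2.mk u v, Sym2.mk v w, Sym2.mk w m, Sym2.mk u m} :
              Finset (Sym2 (Fin n))), J {e} ω) + 3*p^4) := by
    intro ω
    rw [eta_eq p i j k l hij hik hil hjk hjl hkl ω,
      eta_eq p u v w m huv huw hum hvw hvm hwm ω]
  simp only [hrw]
  exact main_calc p hp.le hp1.le _ _
    (quad_card i j k l hij hik hil hjk hjl hkl)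
    (quad_card u v w m huv huw hum hvw hvm hwm)
    (inter_card_le_one i j k l u v w m huv huw hum hvw hvm hwm hcap)

end
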